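/- arXiv:1810.01533 — 2 statements merged into one kernel-verified Lean document; each statement's English description precedes it below -/
import Mathlib

section
/- For a deterministic codeword length L = ℓ (constant, so E[L] = ℓ and E[L²] = ℓ²) and arrival probability q with qℓ < 1, the average peak age is Δ^P = (ℓ² − ℓ)/(2(1/q − ℓ)) + ℓ + 1/q, and the optimal arrival rate satisfies 1/q* = sqrt((ℓ² − ℓ)/2) + ℓ with minimum peak age sqrt(2(ℓ² − ℓ)) + 2ℓ. -/
/-- Geo/D/1 specialization: for deterministic codeword length ℓ ≥ 2, the peak
age for arrival probability q with qℓ < 1 is (ℓ²−ℓ)/(2(1/q−ℓ)) + ℓ + 1/q; the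
optimal arrival rate q* satisfies 1/q* = sqrt((ℓ²−ℓ)/2) + ℓ, and the minimum
peak age is sqrt(2(ℓ²−ℓ)) + 2ℓ. -/
theorem paoi_deterministic_length (l : ℝ) (hl : 2 ≤ l) :
    let Δ : ℝ → ℝ := fun q => (l ^ 2 - l) / (2 * (1 / q - l)) + l + 1 / q
    let qstar : ℝ := (Real.sqrt ((l ^ 2 - l) / 2) + l)⁻¹
    1 / qstar = Real.sqrt ((l ^ 2 - l) / 2) + l ∧
    Δ qstar = Real.sqrt (2 * (l ^ 2 - l)) + 2 * l ∧
    (∀ q : ℝ, 0 < q → q * l < 1 → Real.sqrt (2 * (l ^ 2 - l)) + 2 * l ≤ Δ q) := by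
  intro Δ qstar
  have hl0 : (0:ℝ) < l := by linarith
  have hA : (0:ℝ) < (l ^ 2 - l) / 2 := by nlinarith
  set s := Real.sqrt ((l ^ 2 - l) / 2) with hs
  have hs0 : 0 < s := Real.sqrt_pos.mpr hA
  have hs2 : s ^ 2 = (l ^ 2 - l) / 2 := Real.sq_sqrt hA.le
  have hsl : 0 < s + l := by linarith
  have h1 : 1 / qstar = s + l := by
    simp only [qstar, one_div, inv_inv, hs]
  have h2s : Real.sqrt (2 * (l ^ 2 - l)) = 2 * s := by
    rw [show 2 * (l ^ 2 - l) = (2 * s) ^ 2 by nlinarith]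
    exact Real.sqrt_sq (by linarith)
  refine ⟨h1, ?_, ?_⟩
  · show (l ^ 2 - l) / (2 * (1 / qstar - l)) + l + 1 / qstar = _
    rw [h1, h2s]
    have hne : (2 : ℝ) * (s + l - l) ≠ 0 := by
      simp; linarith
    rw [show s + l - l = s by ring]
    field_simp
    nlinarith [hs2, hs0]
  · intro q hq hql
    rw [show Δ q = (l ^ 2 - l) / (2 * (1 / q - l)) + l + 1 / q from rfl, h2s]
    have hx : 0 < 1 / q - l := by
      rw [sub_pos, lt_div_iff₀ hq]; nlinarith
    set x := 1 / q - l with hxdef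
    have hy : (l ^ 2 - l) / (2 * x) * x = s ^ 2 := by
      rw [hs2]; field_simp
    have hyval : (l ^ 2 - l) / (2 * x) = s ^ 2 / x := by
      rw [hs2, div_div]
    have key : 2 * s ≤ (l ^ 2 - l) / (2 * x) + x := by
      rw [hyval, ← sub_nonneg]
      have hrw : s ^ 2 / x + x - 2 * s = (x - s) ^ 2 / x := by
        field_simp; ring
      rw [hrw]
      positivity
    have : 1 / q = x + l := by rw [hxdef]; ring
    rw [this]
    linarith [key]
end

section
/- For a uniform source X on n symbols (P_X(x) = 1/n) encoded with a prefix-free code, any code minimizing E[L] has codeword lengths taking at most two consecutive values ⌊log₂ n⌋ and ⌈log₂ n⌉, and for such a code E[L²] − E[L]² ≤ 1/4; consequently the peak-age formula Δ^P = (E[L²] − E[L])/(2(1/q − E[L])) + E[L] + 1/q is finite for all q < 1/⌈log₂ n⌉. -/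
set_option linter.unreachableTactic false
set_option linter.unusedTactic false

-- 2^t ≥ t+2 for t ≥ 2
lemma aux_two_pow (t : ℕ) (ht : 2 ≤ t) : t + 2 ≤ 2 ^ t := by
  induction t with
  | zero => omega
  | succ s ih =>
    rcases Nat.lt_or_ge s 2 with h | h
    · interval_cases s <;> simp_all <;> omega
    · have := ih h
      have : 2 ^ s ≤ 2 ^ (s+1) := by rw [pow_succ]; omega
      omega

lemma aux_two_pow' (t : ℕ) : t + 1 ≤ 2 ^ t := Nat.lt_two_pow_self (n := t)

lemma ptA (k m : ℕ) : ((k:ℝ) + 2) ≤ (m:ℝ) + 2 ^ (k+1) * (2⁻¹) ^ m := by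
  rcases Nat.lt_or_ge m (k+2) with h | h
  · have hm : m ≤ k + 1 := by omega
    have hrw : (2:ℝ) ^ (k+1) * (2⁻¹) ^ m = 2 ^ (k+1-m) := by
      rw [inv_pow, ← Nat.sub_add_cancel hm, pow_add]; field_simp; rw [Nat.add_sub_cancel]
    rw [hrw]
    have h2 : ((k+1-m : ℕ):ℝ) + 1 ≤ 2 ^ (k+1-m) := by
      exact_mod_cast Nat.cast_le.mpr (aux_two_pow' (k+1-m))
    have hcast : ((k+1-m : ℕ):ℝ) = (k:ℝ) + 1 - m := by push_cast [hm]; ring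
    rw [hcast] at h2
    linarith
  · have hpos : (0:ℝ) < 2 ^ (k+1) * (2⁻¹) ^ m := by positivity
    have : (k:ℝ) + 2 ≤ m := by exact_mod_cast Nat.cast_le.mpr h
    linarith

lemma ptB (k m : ℕ) (h1 : m ≠ k) (h2 : m ≠ k+1) :
    ((k:ℝ) + 2) < (m:ℝ) + 2 ^ (k+1) * (2⁻¹) ^ m := by
  rcases Nat.lt_or_ge m (k+2) with h | h
  · have hm : m ≤ k + 1 := by omega
    have hrw : (2:ℝ) ^ (k+1) * (2⁻¹) ^ m = 2 ^ (k+1-m) := by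
      rw [inv_pow, ← Nat.sub_add_cancel hm, pow_add]; field_simp; rw [Nat.add_sub_cancel]
    rw [hrw]
    have ht : 2 ≤ k + 1 - m := by omega
    have h2' : ((k+1-m : ℕ):ℝ) + 2 ≤ 2 ^ (k+1-m) := by
      exact_mod_cast Nat.cast_le.mpr (aux_two_pow (k+1-m) ht)
    have hcast : ((k+1-m : ℕ):ℝ) = (k:ℝ) + 1 - m := by push_cast [hm]; ring
    rw [hcast] at h2'
    linarith
  · have hpos : (0:ℝ) < 2 ^ (k+1) * (2⁻¹) ^ m := by positivity
    have : (k:ℝ) + 2 ≤ m := by exact_mod_cast Nat.cast_le.mpr h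
    linarith

open Finset in
lemma sum_ite_fin (n a : ℕ) (ha : a ≤ n) (x y : ℝ) :
    ∑ i : Fin n, (if (i:ℕ) < a then x else y) = a * x + (n - a : ℕ) * y := by
  rw [Fin.sum_univ_eq_sum_range (fun j => if j < a then x else y) n]
  rw [Finset.sum_ite]
  have h1 : (Finset.range n).filter (fun j => j < a) = Finset.range a := by
    ext j; simp; omega
  have h2 : (Finset.range n).filter (fun j => ¬ j < a) = Finset.Ico a n := by
    ext j; simp [Finset.mem_Ico]; omega
  rw [h1, h2, Finset.sum_const, Finset.sum_const, Finset.card_range, Nat.card_Ico]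
  simp [nsmul_eq_mul]

open Finset in
/-- Uniform source: any prefix-free code minimizing E[L] for the uniform source
on n symbols uses only the lengths ⌊log₂ n⌋ and ⌈log₂ n⌉; for such a code the
variance satisfies E[L²] − E[L]² ≤ 1/4, and the peak age formula is finite
(i.e. the system is stable, E[L] < 1/q) for all q < 1/⌈log₂ n⌉. -/
theorem uniform_source_optimal_code (n : ℕ) (hn : 2 ≤ n) (ℓ : Fin n → ℕ)
    (hkraft : ∑ i, ((2:ℝ))⁻¹ ^ ℓ i ≤ 1)
    (hopt : ∀ ℓ' : Fin n → ℕ, (∑ i, ((2:ℝ))⁻¹ ^ ℓ' i ≤ 1) →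
      ∑ i, (1 / (n:ℝ)) * ℓ i ≤ ∑ i, (1 / (n:ℝ)) * ℓ' i) :
    (∀ i, ℓ i = Nat.log 2 n ∨ ℓ i = Nat.clog 2 n) ∧
    (∑ i, (1 / (n:ℝ)) * (ℓ i : ℝ) ^ 2) - (∑ i, (1 / (n:ℝ)) * ℓ i) ^ 2 ≤ 1 / 4 ∧
    (∀ q : ℝ, 0 < q → q < 1 / (Nat.clog 2 n : ℝ) →
      ∑ i, (1 / (n:ℝ)) * ℓ i < 1 / q) := by
  have hn0 : (0:ℝ) < n := by positivity
  set k := Nat.log 2 n with hk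
  have hk1 : 2 ^ k ≤ n := Nat.pow_log_le_self 2 (by omega)
  have hk2 : n < 2 ^ (k+1) := Nat.lt_pow_succ_log_self (by norm_num) n
  set a := 2 ^ (k+1) - n with hadef
  have ha1 : 0 < a := by omega
  have ha2 : a ≤ n := by
    have : 2 ^ (k+1) ≤ 2 * n := by
      have : 2 ^ (k+1) = 2 * 2 ^ k := by ring
      omega
    omega
  have hacast : (a:ℝ) = 2 ^ (k+1) - n := by
    push_cast [hadef, Nat.cast_sub (le_of_lt hk2)]
    norm_num
  have hnacast : ((n - a : ℕ):ℝ) = (n:ℝ) - a := by push_cast [ha2]; ring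
  -- the reference code
  set ℓ' : Fin n → ℕ := fun i => if (i:ℕ) < a then k else k + 1 with hℓ'
  have hkraft' : ∑ i, ((2:ℝ))⁻¹ ^ ℓ' i = 1 := by
    have : ∀ i : Fin n, ((2:ℝ))⁻¹ ^ ℓ' i
        = (if (i:ℕ) < a then ((2:ℝ)⁻¹) ^ k else ((2:ℝ)⁻¹) ^ (k+1)) := by
      intro i; simp only [hℓ', apply_ite (((2:ℝ))⁻¹ ^ ·)]
    rw [Finset.sum_congr rfl (fun i _ => this i), sum_ite_fin n a ha2]
    rw [hnacast, hacast]
    have h2k : (0:ℝ) < 2 ^ k := by positivity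
    field_simp
    ring
    rw [← mul_pow]; norm_num
  -- upper bound on the average length from optimality
  have hE := hopt ℓ' (le_of_eq hkraft')
  have hE' : ∑ i, (1 / (n:ℝ)) * (ℓ' i : ℝ)
      = (1/(n:ℝ)) * ((a:ℝ) * k + ((n:ℝ) - a) * (k+1)) := by
    rw [← Finset.mul_sum]
    congr 1
    have : ∀ i : Fin n, ((ℓ' i : ℕ):ℝ)
        = (if (i:ℕ) < a then (k:ℝ) else (k:ℝ)+1) := by
      intro i; simp only [hℓ', apply_ite (fun m : ℕ => (m:ℝ))]
      push_cast; rfl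
    rw [Finset.sum_congr rfl (fun i _ => this i), sum_ite_fin n a ha2, hnacast]
  rw [hE'] at hE
  -- total length T
  have hT : ∑ i, (1 / (n:ℝ)) * (ℓ i : ℝ) = (1/(n:ℝ)) * ∑ i, (ℓ i : ℝ) := by
    rw [← Finset.mul_sum]
  set T := ∑ i : Fin n, (ℓ i : ℝ) with hTdef
  have hTub : T ≤ (a:ℝ) * k + ((n:ℝ) - a) * (k+1) := by
    rw [hT] at hE
    have h1n : (0:ℝ) < 1/n := by positivity
    calc T = n * ((1/(n:ℝ)) * T) := by field_simp
    _ ≤ n * ((1/(n:ℝ)) * ((a:ℝ) * k + ((n:ℝ) - a) * (k+1))) := by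
        apply mul_le_mul_of_nonneg_left hE (le_of_lt hn0)
    _ = (a:ℝ) * k + ((n:ℝ) - a) * (k+1) := by field_simp
  -- lower bound machinery
  have hglb : ∑ i : Fin n, ((ℓ i : ℝ) + 2 ^ (k+1) * (2⁻¹) ^ ℓ i)
      ≤ T + 2 ^ (k+1) := by
    rw [Finset.sum_add_distrib, ← Finset.mul_sum]
    have : (2:ℝ) ^ (k+1) * ∑ i, (2⁻¹:ℝ) ^ ℓ i ≤ 2 ^ (k+1) * 1 := by
      apply mul_le_mul_of_nonneg_left hkraft (by positivity)
    rw [hTdef]; linarith [this]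
  -- membership: all lengths are k or k+1
  have hmem : ∀ i, ℓ i = k ∨ ℓ i = k + 1 := by
    by_contra hc
    push_neg at hc
    obtain ⟨i₀, h1, h2⟩ := hc
    have hstrict : ∑ i : Fin n, ((k:ℝ) + 2)
        < ∑ i : Fin n, ((ℓ i : ℝ) + 2 ^ (k+1) * (2⁻¹) ^ ℓ i) := by
      apply Finset.sum_lt_sum
      · intro i _; exact ptA k (ℓ i)
      · exact ⟨i₀, Finset.mem_univ _, ptB k (ℓ i₀) h1 h2⟩
    rw [Finset.sum_const, Finset.card_univ, Fintype.card_fin, nsmul_eq_mul] at hstrict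
    have : (n:ℝ) * ((k:ℝ) + 2) < (a:ℝ) * k + ((n:ℝ) - a) * (k+1) + 2 ^ (k+1) := by
      linarith
    rw [hacast] at this
    nlinarith [this]
  -- identify clog and finish membership conclusion + pointwise bound by clog
  set K := Nat.clog 2 n with hK
  have hK1 : 1 ≤ K := Nat.clog_pos (by norm_num) hn
  obtain ⟨hmem', hle⟩ : (∀ i, ℓ i = k ∨ ℓ i = K) ∧ (∀ i, ℓ i ≤ K) := by
    rcases eq_or_ne (2 ^ k) n with hpow | hpow
    · -- power of two: K = k, all lengths = k
      have hKk : K = k := by rw [hK, ← hpow, Nat.clog_pow 2 k (by norm_num)]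
      have hall : ∀ i, ℓ i = k := by
        by_contra hc
        push_neg at hc
        obtain ⟨i₀, hi₀⟩ := hc
        have hi₀' : ℓ i₀ = k + 1 := by rcases hmem i₀ with h | h; exact absurd h hi₀; exact h
        have hstrict : ∑ i : Fin n, (k:ℝ) < ∑ i : Fin n, (ℓ i : ℝ) := by
          apply Finset.sum_lt_sum
          · intro i _
            rcases hmem i with h | h <;> rw [h] <;> push_cast <;> linarith
          · refine ⟨i₀, Finset.mem_univ _, ?_⟩
            rw [hi₀']; push_cast; linarith
        rw [Finset.sum_const, Finset.card_univ, Fintype.card_fin, nsmul_eq_mul] at hstrict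
        have han : (a:ℝ) = n := by
          rw [hacast]
          have : (2:ℝ)^(k+1) = 2 * 2^k := by ring
          rw [this]
          have : ((2:ℕ)^k : ℝ) = (n:ℝ) := by exact_mod_cast congrArg (Nat.cast (R := ℝ)) hpow
          push_cast at this
          linarith
        rw [han] at hTub
        have : T ≤ (n:ℝ) * k := by linarith [hTub]
        linarith
      exact ⟨fun i => Or.inl (hall i), fun i => by rw [hall i, hKk]⟩
    · -- not a power of two: K = k + 1
      have hk1' : 2 ^ k < n := lt_of_le_of_ne hk1 hpow
      have hKk : K = k + 1 := by
        have hub : K ≤ k + 1 := by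
          rw [hK, Nat.clog_le_iff_le_pow (by norm_num : 1 < 2)]
          omega
        have hlb : ¬ (K ≤ k) := by
          rw [hK, Nat.clog_le_iff_le_pow (by norm_num : 1 < 2)]
          omega
        omega
      refine ⟨fun i => by rw [hKk]; exact hmem i, fun i => ?_⟩
      rcases hmem i with h | h <;> omega
  have hconcl1 : ∀ i, ℓ i = Nat.log 2 n ∨ ℓ i = Nat.clog 2 n := hmem'
  refine ⟨hconcl1, ?_, ?_⟩
  · -- variance bound
    have hone : ∑ _i : Fin n, (1/(n:ℝ)) = 1 := by
      rw [Finset.sum_const, Finset.card_univ, Fintype.card_fin, nsmul_eq_mul]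
      field_simp
    set c := ∑ i : Fin n, (1 / (n:ℝ)) * (ℓ i : ℝ) with hc
    have key : ∀ i : Fin n, (1/(n:ℝ)) * (ℓ i:ℝ)^2
        = (1/(n:ℝ)) * (ℓ i:ℝ) + (2*(k:ℝ))*((1/(n:ℝ)) * (ℓ i:ℝ))
          - ((k:ℝ) + (k:ℝ)^2) * (1/(n:ℝ)) := by
      intro i
      rcases hmem i with h | h <;> rw [h] <;> push_cast <;> ring
    have hs : ∑ i : Fin n, (1/(n:ℝ)) * (ℓ i:ℝ)^2
        = c + 2*(k:ℝ)*c - ((k:ℝ) + (k:ℝ)^2) := by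
      rw [Finset.sum_congr rfl (fun i _ => key i)]
      rw [Finset.sum_sub_distrib, Finset.sum_add_distrib]
      have e1 : ∑ i : Fin n, 2*(k:ℝ)*((1/(n:ℝ))*(ℓ i:ℝ)) = 2*(k:ℝ)*c := by
        rw [hc, Finset.mul_sum]
      have e2 : ∑ _i : Fin n, ((k:ℝ)+(k:ℝ)^2)*(1/(n:ℝ)) = (k:ℝ)+(k:ℝ)^2 := by
        rw [← Finset.mul_sum, hone, mul_one]
      rw [e1, e2, ← hc]
    rw [hs]
    nlinarith [sq_nonneg (c - (k:ℝ) - 1/2)]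
  · -- stability
    intro q hq1 hq2
    have hK0 : (0:ℝ) < K := by exact_mod_cast Nat.lt_of_lt_of_le Nat.zero_lt_one hK1
    have hcK : ∑ i : Fin n, (1 / (n:ℝ)) * (ℓ i : ℝ) ≤ (K:ℝ) := by
      have : ∑ i : Fin n, (1 / (n:ℝ)) * (ℓ i : ℝ)
          ≤ ∑ _i : Fin n, (1 / (n:ℝ)) * (K:ℝ) := by
        apply Finset.sum_le_sum
        intro i _
        apply mul_le_mul_of_nonneg_left _ (by positivity)
        exact_mod_cast Nat.cast_le.mpr (hle i)
      rw [Finset.sum_const, Finset.card_univ, Fintype.card_fin, nsmul_eq_mul] at this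
      calc ∑ i : Fin n, (1 / (n:ℝ)) * (ℓ i : ℝ) ≤ n * ((1/(n:ℝ)) * K) := this
        _ = K := by field_simp
    have h1 : q * K < 1 := (lt_div_iff₀ hK0).mp hq2
    have h2 : (K:ℝ) < 1 / q := by
      rw [lt_div_iff₀ hq1]; linarith [mul_comm q (K:ℝ)]
    linarith
end
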